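/- Let G be a finite simple graph with no isolatable vertex. Suppose further that any two maximal independent sets of G of different cardinalities have nonempty intersection. Then G is well-covered. -/

import Mathlib

/-- A set of vertices is independent if no two of its vertices are adjacent. -/
def IsIndep {V : Type*} (G : SimpleGraph V) (s : Set V) : Prop :=
  ∀ ⦃u⦄, u ∈ s → ∀ ⦃v⦄, v ∈ s → ¬ G.Adj u v

/-- A maximal independent set: independent and contained in no strictly larger
independent set. -/
def MaxIndep {V : Type*} (G : SimpleGraph V) (s : Set V) : Prop :=
  IsIndep G s ∧ ∀ t : Set V, IsIndep G t → s ⊆ t → s = t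

/-- A maximal independent set of the subgraph induced on `A`. -/
def MaxIndepOn {V : Type*} (G : SimpleGraph V) (A : Set V) (s : Set V) : Prop :=
  s ⊆ A ∧ IsIndep G s ∧ ∀ t : Set V, t ⊆ A → IsIndep G t → s ⊆ t → s = t

/-- A graph is well-covered if every maximal independent set has the same cardinality. -/
def WellCovered {V : Type*} (G : SimpleGraph V) : Prop :=
  ∀ s t : Set V, MaxIndep G s → MaxIndep G t → s.ncard = t.ncard

/-- The closed neighborhood `N[S]`: the union of `S` with the set of all vertices
adjacent to some vertex of `S`. -/
def ClosedNbhd {V : Type*} (G : SimpleGraph V) (S : Set V) : Set V :=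
  S ∪ {v | ∃ u ∈ S, G.Adj u v}

/-- A vertex `x` is isolatable if there is an independent set `M` such that `x` is the
unique vertex lying outside `N[M]`. -/
def Isolatable {V : Type*} (G : SimpleGraph V) (x : V) : Prop :=
  ∃ M : Set V, IsIndep G M ∧ (ClosedNbhd G M)ᶜ = {x}

/-- If `G` has no isolatable vertex and any two maximal independent sets of different
cardinalities intersect, then `G` is well-covered. -/
-- every independent set extends to a maximal one
lemma exists_max {V : Type*} [Fintype V] (G : SimpleGraph V) (s : Set V) (hs : IsIndep G s) :
    ∃ t, s ⊆ t ∧ MaxIndep G t := by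
  classical
  have H : ∀ n (s : Set V), IsIndep G s → Fintype.card V - s.ncard ≤ n →
      ∃ t, s ⊆ t ∧ MaxIndep G t := by
    intro n
    induction n with
    | zero =>
      intro s hs hle
      refine ⟨s, subset_rfl, hs, fun t ht hst => ?_⟩
      by_contra hne
      have hss : s ⊂ t := hst.ssubset_of_ne hne
      have h1 : s.ncard < t.ncard := Set.ncard_lt_ncard hss t.toFinite
      have h2 : t.ncard ≤ Fintype.card V := by
        have := Set.ncard_le_ncard (Set.subset_univ t) Set.finite_univ
        simpa [Set.ncard_univ, Nat.card_eq_fintype_card] using this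
      omega
    | succ n ih =>
      intro s hs hle
      by_cases h : ∀ t, IsIndep G t → s ⊆ t → s = t
      · exact ⟨s, subset_rfl, hs, h⟩
      · push_neg at h
        obtain ⟨t, ht, hst, hne⟩ := h
        have hss : s ⊂ t := hst.ssubset_of_ne hne
        have h1 : s.ncard < t.ncard := Set.ncard_lt_ncard hss t.toFinite
        obtain ⟨u, htu, hu⟩ := ih t ht (by omega)
        exact ⟨u, hst.trans htu, hu⟩
  exact H (Fintype.card V) s hs (Nat.sub_le _ _)

-- maximal independent sets dominate
lemma max_dominates {V : Type*} (G : SimpleGraph V) {B : Set V} (hB : MaxIndep G B)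
    (z : V) : z ∈ ClosedNbhd G B := by
  by_contra hz
  simp only [ClosedNbhd, Set.mem_union, Set.mem_setOf_eq, not_or, not_exists] at hz
  obtain ⟨hzB, hadj⟩ := hz
  push_neg at hadj
  have hind : IsIndep G (insert z B) := by
    intro u hu v hv hadjv
    rcases hu with rfl | hu
    · rcases hv with rfl | hv
      · exact G.irrefl hadjv
      · exact hadj v hv (G.adj_symm hadjv)
    · rcases hv with rfl | hv
      · exact hadj u hu hadjv
      · exact hB.1 hu hv hadjv
  have := hB.2 _ hind (Set.subset_insert z B)
  exact hzB (this ▸ Set.mem_insert z B)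

theorem stmt_6 {V : Type*} [Fintype V] (G : SimpleGraph V)
    (hno : ∀ x : V, ¬ Isolatable G x)
    (hint : ∀ M N : Set V, MaxIndep G M → MaxIndep G N → M.ncard ≠ N.ncard →
      (M ∩ N).Nonempty) :
    WellCovered G := by
  show ∀ s t : Set V, MaxIndep G s → MaxIndep G t → s.ncard = t.ncard

  classical
  by_contra hwc
  push_neg at hwc
  obtain ⟨s, t, hs, ht, hne⟩ := hwc
  have hex : ∃ n, ∃ A B : Set V, MaxIndep G A ∧ MaxIndep G B ∧ A.ncard < B.ncard ∧
      (A ∩ B).ncard = n := by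
    rcases lt_or_gt_of_ne hne with h | h
    · exact ⟨_, s, t, hs, ht, h, rfl⟩
    · exact ⟨_, t, s, ht, hs, h, rfl⟩
  obtain ⟨A, B, hA, hB, hlt, hcard⟩ := Nat.find_spec hex
  set n := Nat.find hex with hn
  -- A ∩ B nonempty
  obtain ⟨x, hxA, hxB⟩ := hint A B hA hB (Nat.ne_of_lt hlt)
  -- x not isolatable wrt B \ {x}
  have hBd : IsIndep G (B \ {x}) := fun u hu v hv => hB.1 hu.1 hv.1
  have hniso := hno x
  rw [Isolatable] at hniso
  push_neg at hniso
  have hne' := hniso (B \ {x}) hBd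
  have hxc : x ∈ (ClosedNbhd G (B \ {x}))ᶜ := by
    simp only [ClosedNbhd, Set.mem_compl_iff, Set.mem_union, Set.mem_setOf_eq, not_or,
      not_exists]
    constructor
    · exact fun h => h.2 rfl
    · push_neg
      intro u hu
      exact hB.1 hu.1 hxB
  have hexy : ∃ y, y ∈ (ClosedNbhd G (B \ {x}))ᶜ ∧ y ≠ x := by
    by_contra h
    push_neg at h
    exact hne' (Set.eq_of_subset_of_subset (fun y hy => h y hy)
      (fun y hy => by rw [Set.mem_singleton_iff] at hy; exact hy ▸ hxc))
  obtain ⟨y, hyc, hyx⟩ := hexy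
  simp only [ClosedNbhd, Set.mem_compl_iff, Set.mem_union, Set.mem_setOf_eq, not_or,
    not_exists] at hyc
  obtain ⟨hyB', hyadj⟩ := hyc
  push_neg at hyadj
  have hyB : y ∉ B := fun h => hyB' ⟨h, hyx⟩
  -- y adjacent to x
  have hxy : G.Adj x y := by
    have := max_dominates G hB y
    rcases this with h | ⟨u, hu, hadj⟩
    · exact absurd h hyB
    · rcases eq_or_ne u x with rfl | hux
      · exact hadj
      · exact absurd hadj (hyadj u ⟨hu, hux⟩)
  -- T independent
  have hT : IsIndep G (insert y (B \ {x})) := by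
    intro u hu v hv hadj
    rcases hu with rfl | hu
    · rcases hv with rfl | hv
      · exact G.irrefl hadj
      · exact hyadj v hv (G.adj_symm hadj)
    · rcases hv with rfl | hv
      · exact hyadj u hu hadj
      · exact hB.1 hu.1 hv.1 hadj
  obtain ⟨B', hTB', hB'⟩ := exists_max G _ hT
  have hyB'' : y ∈ B' := hTB' (Set.mem_insert y _)
  have hBx : B \ {x} ⊆ B' := (Set.subset_insert y _).trans hTB'
  have hxB' : x ∉ B' := fun h => hB'.1 h hyB'' hxy
  -- |B| ≤ |B'|
  have hcardB : B.ncard ≤ B'.ncard := by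
    have h1 : (insert y (B \ {x})).ncard = (B \ {x}).ncard + 1 :=
      Set.ncard_insert_of_notMem (fun h => hyB' h) (B \ {x}).toFinite
    have h2 : (B \ {x}).ncard + 1 = B.ncard := by
      have := Set.ncard_diff_singleton_add_one hxB B.toFinite
      omega
    have h3 : (insert y (B \ {x})).ncard ≤ B'.ncard :=
      Set.ncard_le_ncard hTB' B'.toFinite
    omega
  -- A ∩ B' ⊆ (A ∩ B) \ {x}
  have hsub : A ∩ B' ⊆ (A ∩ B) \ {x} := by
    rintro z ⟨hzA, hzB'⟩
    have hzx : z ≠ x := fun h => hxB' (h ▸ hzB')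
    have hzB : z ∈ B := by
      by_contra hzB
      rcases max_dominates G hB z with h | ⟨u, hu, hadj⟩
      · exact hzB h
      · rcases eq_or_ne u x with rfl | hux
        · exact hA.1 hxA hzA hadj
        · exact hB'.1 (hBx ⟨hu, hux⟩) hzB' hadj
    exact ⟨⟨hzA, hzB⟩, hzx⟩
  -- strict decrease of intersection
  have hlt2 : (A ∩ B').ncard < n := by
    have h1 : (A ∩ B').ncard ≤ ((A ∩ B) \ {x}).ncard :=
      Set.ncard_le_ncard hsub ((A ∩ B) \ {x}).toFinite
    have h2 : ((A ∩ B) \ {x}).ncard < (A ∩ B).ncard :=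
      Set.ncard_diff_singleton_lt_of_mem ⟨hxA, hxB⟩ (A ∩ B).toFinite
    omega
  exact Nat.find_min hex hlt2 ⟨A, B', hA, hB', lt_of_lt_of_le hlt hcardB, rfl⟩
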